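/- For every group size g ≥ 2 and appropriate n with n/g ≥ 3 an integer, there exists a preference profile on n metrics and m = 2·binom(n,g) alternatives such that every subset K satisfying positional representation for group size g has |K| ≥ n − g + 1. -/

import Mathlib

/-- `Ct σ S r a`: number of metrics in `S` that rank alternative `a` in the top `r`
positions, where `σ i` maps each alternative to its (0-indexed) position. -/
def Ct {n m : ℕ} (σ : Fin n → Fin m ≃ Fin m) (S : Finset (Fin n)) (r : ℕ) (a : Fin m) : ℕ :=
  (S.filter fun i => ((σ i) a : ℕ) + 1 ≤ r).card

/-- `K` satisfies positional representation for group size `g`. -/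
def PosRep {n m : ℕ} (σ : Fin n → Fin m ≃ Fin m) (g : ℕ) (K : Finset (Fin n)) : Prop :=
  ∀ r ∈ Finset.Icc 1 m, ∀ a : Fin m, Ct σ Finset.univ r a / g ≤ Ct σ K r a

/-- Encoding of `Fin N × Bool` into `Fin (2*N)`: `(r, false) ↦ r`, `(r, true) ↦ N + r`. -/
def pairEquiv (N : ℕ) : Fin N × Bool ≃ Fin (2 * N) where
  toFun x := ⟨(if x.2 then N else 0) + x.1, by have := x.1.isLt; split <;> omega⟩
  invFun p := if h : (p : ℕ) < N then (⟨p, h⟩, false)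
    else (⟨(p : ℕ) - N, by have := p.isLt; omega⟩, true)
  left_inv x := by
    obtain ⟨r, b⟩ := x
    have := r.isLt
    cases b
    · simp
    · simp only [if_true]
      rw [dif_neg (by omega)]
      simp [Fin.ext_iff]
  right_inv p := by
    have := p.isLt
    by_cases h : (p : ℕ) < N
    · simp only [dif_pos h]
      simp
    · simp only [dif_neg h]
      simp [Fin.ext_iff]
      omega

/-- Negation as an equivalence of `Bool`. -/
def boolNotEquiv : Bool ≃ Bool := ⟨Bool.not, Bool.not, Bool.not_not, Bool.not_not⟩

theorem stmt4 {n g : ℕ} (hg : 2 ≤ g) (hdvd : g ∣ n) (h3 : 3 ≤ n / g) :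
    ∃ σ : Fin n → Fin (2 * n.choose g) ≃ Fin (2 * n.choose g),
      ∀ K : Finset (Fin n), PosRep σ g K → n - g + 1 ≤ K.card := by
  have hn0 : 0 < n := by
    rcases Nat.eq_zero_or_pos n with h | h
    · simp [h] at h3
    · exact h
  have hgn : g ≤ n := Nat.le_of_dvd hn0 hdvd
  set N := n.choose g with hNdef
  have hN : 0 < N := Nat.choose_pos hgn
  -- enumerate the g-subsets of Fin n
  have hcard : ((Finset.univ : Finset (Fin n)).powersetCard g).card = N := by
    simp [Finset.card_powersetCard, hNdef]
  set P := (Finset.univ : Finset (Fin n)).powersetCard g with hP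
  let e : P ≃ Fin N := P.equivFinOfCardEq hcard
  let G : Fin N → Finset (Fin n) := fun r => (e.symm r : Finset (Fin n))
  have hGcard : ∀ r, (G r).card = g := by
    intro r
    have h2 : (↑(e.symm r) : Finset (Fin n)) ∈ Finset.powersetCard g Finset.univ :=
      (e.symm r).2
    exact (Finset.mem_powersetCard.mp h2).2
  -- the profile
  let T : Fin n → Fin N × Bool ≃ Fin N × Bool := fun i =>
    Equiv.prodShear (Equiv.refl (Fin N))
      (fun r => if i ∈ G r then Equiv.refl Bool else boolNotEquiv)
  let σ : Fin n → Fin (2 * N) ≃ Fin (2 * N) := fun i =>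
    (pairEquiv N).symm.trans ((T i).trans (pairEquiv N))
  have hval : ∀ (i : Fin n) (r : Fin N),
      ((σ i) (pairEquiv N (r, false)) : ℕ) = if i ∈ G r then (r : ℕ) else N + r := by
    intro i r
    by_cases h : i ∈ G r <;>
      simp [σ, T, Equiv.prodShear, h, boolNotEquiv, pairEquiv]
  refine ⟨σ, ?_⟩
  intro K hK
  by_contra hc
  push_neg at hc
  have hKc : g ≤ Kᶜ.card := by
    have h1 : K.card + Kᶜ.card = n := by
      simpa using Finset.card_add_card_compl K
    omega
  obtain ⟨S, hSsub, hScard⟩ := Finset.exists_subset_card_eq hKc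
  have hSP : S ∈ P := by
    rw [hP, Finset.mem_powersetCard]
    exact ⟨Finset.subset_univ S, hScard⟩
  set r : Fin N := e ⟨S, hSP⟩ with hr
  have hGr : G r = S := by
    simp [G, hr]
  -- apply PosRep at rank r+1 and alternative (r, false)
  have hmem : (r : ℕ) + 1 ∈ Finset.Icc 1 (2 * N) := by
    have := r.isLt
    simp only [Finset.mem_Icc]
    omega
  have hrep := hK ((r : ℕ) + 1) hmem (pairEquiv N (r, false))
  have hCuniv : Ct σ Finset.univ ((r : ℕ) + 1) (pairEquiv N (r, false)) = g := by
    unfold Ct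
    rw [show (Finset.univ.filter fun i =>
        ((σ i) (pairEquiv N (r, false)) : ℕ) + 1 ≤ (r : ℕ) + 1) = G r from ?_]
    · exact hGcard r
    · ext i
      rw [Finset.mem_filter, hval i r]
      by_cases h : i ∈ G r <;> simp [h] <;> omega
  rw [hCuniv, Nat.div_self (by omega : 0 < g)] at hrep
  have : (K.filter fun i =>
      ((σ i) (pairEquiv N (r, false)) : ℕ) + 1 ≤ (r : ℕ) + 1).Nonempty := by
    rw [← Finset.card_pos]
    exact lt_of_lt_of_le Nat.zero_lt_one hrep
  obtain ⟨i, hi⟩ := this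
  rw [Finset.mem_filter] at hi
  obtain ⟨hiK, hile⟩ := hi
  rw [hval i r] at hile
  have hiG : i ∈ G r := by
    by_contra h
    rw [if_neg h] at hile
    omega
  rw [hGr] at hiG
  exact (Finset.mem_compl.mp (hSsub hiG)) hiK
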